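/- Decomposition of the average energy change in the non-ideal TPM scheme (Eq. (18) of the paper): suppose both non-ideal measurements have maximal correlation C, i.e. q⁰ n n = C for all n and qf m m = C for all m. Define ΔE_nonid = ∑ m n k l, qf k m * P l m * q⁰ l n * p n * (Ef k − E⁰ n). Then ΔE_nonid = C^2 * W_Λ + (∑ m n, ∑ l ≠ n, ∑ k ≠ m, qf k m * P l m * q⁰ l n * p n * (Ef k − E⁰ n)) + C * ∑ m n, p n * ((∑ k ≠ m, qf k m * P n m * (Ef k − E⁰ n)) + (∑ l ≠ n, q⁰ l n * P l m * (Ef m − E⁰ n))), where W_Λ = ∑ n m, p n * P n m * (Ef m − E⁰ n). -/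
import Mathlib


open Finset

/-- Decomposition of the average energy change in the non-ideal TPM scheme
(Eq. (18)): if both non-ideal measurements have maximal correlation `C`
(`q⁰ n n = C` and `qf m m = C`), then
`ΔE_nonid = C² W_Λ + (∑ m n, ∑ l ≠ n, ∑ k ≠ m, qf k m * P l m * q⁰ l n * p n * (Ef k − E⁰ n))
 + C * ∑ m n, p n * ((∑ k ≠ m, qf k m * P n m * (Ef k − E⁰ n))
 + (∑ l ≠ n, q⁰ l n * P l m * (Ef m − E⁰ n)))`. -/
theorem average_energy_change_decomposition
    (d : ℕ) (hd : 1 ≤ d) (E0 Ef : Fin d → ℝ) (β : ℝ) (hβ : 0 < β)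
    (p : Fin d → ℝ)
    (hp : ∀ n, p n = Real.exp (-β * E0 n) / ∑ k, Real.exp (-β * E0 k))
    (P : Fin d → Fin d → ℝ)
    (hP0 : ∀ l m, 0 ≤ P l m) (hP1 : ∀ l, ∑ m, P l m = 1)
    (q0 qf : Fin d → Fin d → ℝ)
    (hq00 : ∀ l n, 0 ≤ q0 l n) (hq01 : ∀ n, ∑ l, q0 l n = 1)
    (hqf0 : ∀ k m, 0 ≤ qf k m) (hqf1 : ∀ m, ∑ k, qf k m = 1)
    (C : ℝ) (hC0 : 0 ≤ C) (hC1 : C ≤ 1)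
    (hq0C : ∀ n, q0 n n = C) (hqfC : ∀ m, qf m m = C)
    (ΔE : ℝ)
    (hΔE : ΔE = ∑ m, ∑ n, ∑ k, ∑ l,
        qf k m * P l m * q0 l n * p n * (Ef k - E0 n))
    (WΛ : ℝ)
    (hWΛ : WΛ = ∑ n, ∑ m, p n * P n m * (Ef m - E0 n)) :
    ΔE = C ^ 2 * WΛ +
        (∑ m, ∑ n, ∑ l ∈ univ.filter (· ≠ n), ∑ k ∈ univ.filter (· ≠ m),
          qf k m * P l m * q0 l n * p n * (Ef k - E0 n)) +
        C * ∑ m, ∑ n, p n *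
          ((∑ k ∈ univ.filter (· ≠ m), qf k m * P n m * (Ef k - E0 n)) +
            (∑ l ∈ univ.filter (· ≠ n), q0 l n * P l m * (Ef m - E0 n))) := by
  classical
  have split : ∀ (f : Fin d → ℝ) (i : Fin d),
      ∑ k, f k = f i + ∑ k ∈ univ.filter (· ≠ i), f k := by
    intro f i
    rw [Finset.filter_ne', Finset.add_sum_erase _ f (mem_univ i)]
  have key : ∀ m n, (∑ k, ∑ l, qf k m * P l m * q0 l n * p n * (Ef k - E0 n))
      = C ^ 2 * (p n * P n m * (Ef m - E0 n))
        + (∑ l ∈ univ.filter (· ≠ n), ∑ k ∈ univ.filter (· ≠ m),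
            qf k m * P l m * q0 l n * p n * (Ef k - E0 n))
        + C * (p n *
          ((∑ k ∈ univ.filter (· ≠ m), qf k m * P n m * (Ef k - E0 n)) +
            (∑ l ∈ univ.filter (· ≠ n), q0 l n * P l m * (Ef m - E0 n)))) := by
    intro m n
    have h1 : ∀ k, (∑ l, qf k m * P l m * q0 l n * p n * (Ef k - E0 n))
        = qf k m * P n m * q0 n n * p n * (Ef k - E0 n)
          + ∑ l ∈ univ.filter (· ≠ n), qf k m * P l m * q0 l n * p n * (Ef k - E0 n) :=
      fun k => split _ n
    rw [Finset.sum_congr rfl (fun k _ => h1 k), Finset.sum_add_distrib,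
      split (fun k => qf k m * P n m * q0 n n * p n * (Ef k - E0 n)) m,
      split (fun k => ∑ l ∈ univ.filter (· ≠ n),
        qf k m * P l m * q0 l n * p n * (Ef k - E0 n)) m]
    have e1 : qf m m * P n m * q0 n n * p n * (Ef m - E0 n)
        = C ^ 2 * (p n * P n m * (Ef m - E0 n)) := by
      rw [hq0C, hqfC]; ring
    have e2 : (∑ k ∈ univ.filter (· ≠ m), qf k m * P n m * q0 n n * p n * (Ef k - E0 n))
        = C * (p n * ∑ k ∈ univ.filter (· ≠ m), qf k m * P n m * (Ef k - E0 n)) := by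
      rw [Finset.mul_sum, Finset.mul_sum]
      exact Finset.sum_congr rfl fun k _ => by rw [hq0C]; ring
    have e3 : (∑ l ∈ univ.filter (· ≠ n), qf m m * P l m * q0 l n * p n * (Ef m - E0 n))
        = C * (p n * ∑ l ∈ univ.filter (· ≠ n), q0 l n * P l m * (Ef m - E0 n)) := by
      rw [Finset.mul_sum, Finset.mul_sum]
      exact Finset.sum_congr rfl fun l _ => by rw [hqfC]; ring
    have e4 : (∑ k ∈ univ.filter (· ≠ m), ∑ l ∈ univ.filter (· ≠ n),
          qf k m * P l m * q0 l n * p n * (Ef k - E0 n))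
        = ∑ l ∈ univ.filter (· ≠ n), ∑ k ∈ univ.filter (· ≠ m),
            qf k m * P l m * q0 l n * p n * (Ef k - E0 n) := Finset.sum_comm
    rw [e1, e2, e3, e4]; ring
  rw [hΔE, hWΛ, Finset.sum_congr rfl fun m _ => Finset.sum_congr rfl fun n _ => key m n]
  simp only [Finset.sum_add_distrib, ← Finset.mul_sum]
  rw [show (∑ n, ∑ m, p n * P n m * (Ef m - E0 n))
      = ∑ m, ∑ n, p n * P n m * (Ef m - E0 n) from Finset.sum_comm]
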